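/- If g : (0,1) → [0,∞) is nonincreasing, then the decreasing rearrangement of g with respect to Lebesgue measure on (0,1) equals g almost everywhere. -/

import Mathlib

open MeasureTheory Set

/-- Decreasing rearrangement of `f` with respect to the measure `μ`:
`f*(t) = inf { λ : μ{f > λ} ≤ t }`. -/
noncomputable def rearr {Ω : Type*} [MeasurableSpace Ω] (μ : Measure Ω) (f : Ω → ℝ)
    (t : ℝ) : ℝ :=
  sInf {lam : ℝ | μ {x | lam < f x} ≤ ENNReal.ofReal t}

/-- If `g : (0,1) → [0,∞)` is nonincreasing, then its decreasing rearrangement with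
respect to Lebesgue measure on `(0,1)` equals `g` almost everywhere on `(0,1)`. -/
theorem rearr_of_antitone (g : ℝ → ℝ)
    (hg_nonneg : ∀ s ∈ Ioo (0:ℝ) 1, 0 ≤ g s)
    (hg_anti : AntitoneOn g (Ioo (0:ℝ) 1)) :
    ∀ᵐ s ∂(volume.restrict (Ioo (0:ℝ) 1)),
      rearr (volume.restrict (Ioo (0:ℝ) 1)) g s = g s := by
  set μ := volume.restrict (Ioo (0:ℝ) 1) with hμ
  -- Step 1: the set of discontinuity points of `g` in `(0,1)` is countable.
  have key : ∀ a b : ℝ, 0 < a → b < 1 → a < b →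
      Set.Countable {s | s ∈ Ioo a b ∧ ¬ ContinuousAt g s} := by
    intro a b ha hb hab
    set G : ℝ → ℝ := fun x => g (max a (min b x)) with hGdef
    have hclamp : ∀ x : ℝ, max a (min b x) ∈ Ioo (0:ℝ) 1 := by
      intro x
      constructor
      · exact lt_of_lt_of_le ha (le_max_left _ _)
      · have : max a (min b x) ≤ b := max_le hab.le (min_le_left _ _)
        linarith
    have hG : Antitone G := by
      intro x y hxy
      show g (max a (min b y)) ≤ g (max a (min b x))
      exact hg_anti (hclamp x) (hclamp y) (max_le_max le_rfl (min_le_min le_rfl hxy))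
    apply hG.countable_not_continuousAt.mono
    rintro s ⟨hs, hns⟩
    simp only [mem_setOf_eq]
    intro hGc
    apply hns
    apply hGc.congr
    have hmem : Ioo a b ∈ nhds s := isOpen_Ioo.mem_nhds hs
    filter_upwards [hmem] with x hx
    simp only [hGdef]
    rw [min_eq_right hx.2.le, max_eq_right hx.1.le]
  have cnt : Set.Countable {s | s ∈ Ioo (0:ℝ) 1 ∧ ¬ ContinuousAt g s} := by
    have hsub : {s | s ∈ Ioo (0:ℝ) 1 ∧ ¬ ContinuousAt g s} ⊆
        ⋃ n : ℕ, {s | s ∈ Ioo (1/(n+3):ℝ) (1 - 1/(n+3)) ∧ ¬ ContinuousAt g s} := by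
      rintro s ⟨⟨h0, h1⟩, hd⟩
      have hpos : 0 < min s (1 - s) := lt_min h0 (by linarith)
      obtain ⟨n, hn⟩ := exists_nat_one_div_lt hpos
      have hle : (1:ℝ)/(n+3) ≤ 1/(n+1) := by
        apply div_le_div_of_nonneg_left one_pos.le (by positivity)
        linarith
      have h3 : (1:ℝ)/(n+3) < min s (1 - s) := lt_of_le_of_lt hle hn
      refine mem_iUnion.2 ⟨n, ⟨?_, ?_⟩, hd⟩
      · exact lt_of_lt_of_le h3 (min_le_left _ _)
      · have := lt_of_lt_of_le h3 (min_le_right _ _); linarith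
    refine Countable.mono hsub (countable_iUnion fun n => ?_)
    apply key
    · positivity
    · have : (0:ℝ) < 1/(n+3) := by positivity
      linarith
    · have : (1:ℝ)/(n+3) ≤ 1/3 := by
        apply div_le_div_of_nonneg_left one_pos.le (by norm_num)
        linarith
      linarith
  have hnull : μ {s | s ∈ Ioo (0:ℝ) 1 ∧ ¬ ContinuousAt g s} = 0 := by
    have h0 : volume {s | s ∈ Ioo (0:ℝ) 1 ∧ ¬ ContinuousAt g s} = 0 :=
      cnt.measure_zero _
    exact le_antisymm (le_trans (Measure.restrict_le_self _) h0.le) zero_le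
  have hae : ∀ᵐ s ∂μ, s ∉ {s | s ∈ Ioo (0:ℝ) 1 ∧ ¬ ContinuousAt g s} :=
    measure_eq_zero_iff_ae_notMem.1 hnull
  filter_upwards [ae_restrict_mem measurableSet_Ioo, hae] with s hs hsc
  have hc : ContinuousAt g s := by
    by_contra h; exact hsc ⟨hs, h⟩
  -- Step 2: at a continuity point, rearr = g.
  set S := {lam : ℝ | μ {x | lam < g x} ≤ ENNReal.ofReal s} with hS
  have hmem : g s ∈ S := by
    show μ {x | g s < g x} ≤ ENNReal.ofReal s
    rw [hμ, Measure.restrict_apply' measurableSet_Ioo]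
    have hsub : {x | g s < g x} ∩ Ioo (0:ℝ) 1 ⊆ Ioo 0 s := by
      rintro x ⟨hx, hx01⟩
      refine ⟨hx01.1, ?_⟩
      by_contra h
      push_neg at h
      exact absurd (hg_anti hs hx01 h) (not_le.2 hx)
    calc volume ({x | g s < g x} ∩ Ioo (0:ℝ) 1) ≤ volume (Ioo (0:ℝ) s) :=
          measure_mono hsub
      _ ≤ ENNReal.ofReal s := by rw [Real.volume_Ioo]; simp
  have hlb : ∀ lam ∈ S, (0:ℝ) ≤ lam := by
    intro lam hlam
    by_contra h
    push_neg at h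
    have hsub : Ioo (0:ℝ) 1 ⊆ {x | lam < g x} := fun x hx =>
      lt_of_lt_of_le h (hg_nonneg x hx)
    have h1 : (1:ENNReal) ≤ μ {x | lam < g x} := by
      rw [hμ, Measure.restrict_apply' measurableSet_Ioo]
      calc (1:ENNReal) = volume (Ioo (0:ℝ) 1) := by rw [Real.volume_Ioo]; norm_num
        _ ≤ volume ({x | lam < g x} ∩ Ioo (0:ℝ) 1) :=
            measure_mono (subset_inter hsub subset_rfl)
    have h2 : ENNReal.ofReal s < 1 := ENNReal.ofReal_lt_one.2 hs.2
    exact absurd (h1.trans hlam) (not_le.2 h2)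
  have hub : ∀ lam ∈ S, g s ≤ lam := by
    intro lam hlam
    by_contra h
    push_neg at h
    have hev : {x | lam < g x} ∩ Ioo (0:ℝ) 1 ∈ nhds s := by
      apply Filter.inter_mem
      · exact hc.preimage_mem_nhds (Ioi_mem_nhds h)
      · exact isOpen_Ioo.mem_nhds hs
    have hne : ∃ s', s' ∈ {x | lam < g x} ∩ Ioo (0:ℝ) 1 ∧ s < s' := by
      have h1 : ∀ᶠ x in nhdsWithin s (Ioi s), x ∈ {x | lam < g x} ∩ Ioo (0:ℝ) 1 :=
        Filter.Eventually.filter_mono nhdsWithin_le_nhds hev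
      have h2 : ∀ᶠ x in nhdsWithin s (Ioi s), s < x := self_mem_nhdsWithin
      exact (h1.and h2).exists
    obtain ⟨s', ⟨hs'g, hs'01⟩, hss'⟩ := hne
    have hle : ENNReal.ofReal s' ≤ ENNReal.ofReal s := by
      refine le_trans ?_ hlam
      rw [hμ, Measure.restrict_apply' measurableSet_Ioo]
      calc ENNReal.ofReal s' = volume (Ioo (0:ℝ) s') := by
            rw [Real.volume_Ioo]; norm_num
        _ ≤ volume ({x | lam < g x} ∩ Ioo (0:ℝ) 1) := by
            apply measure_mono
            rintro x ⟨hx0, hxs'⟩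
            have hx01 : x ∈ Ioo (0:ℝ) 1 := ⟨hx0, hxs'.trans hs'01.2⟩
            exact ⟨lt_of_lt_of_le hs'g (hg_anti hx01 hs'01 hxs'.le), hx01⟩
    have : s' ≤ s := by
      rwa [ENNReal.ofReal_le_ofReal_iff (le_of_lt hs.1)] at hle
    linarith
  have h1 : rearr μ g s ≤ g s := csInf_le ⟨0, hlb⟩ hmem
  have h2 : g s ≤ rearr μ g s := le_csInf ⟨g s, hmem⟩ hub
  linarith
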